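/- Let G be a connected r-regular graph with r ≥ 2. If the line graph L(G) admits a closed distance magic labeling, then 1 - r is an eigenvalue of the adjacency matrix of G. -/

import Mathlib

open SimpleGraph Finset Matrix
open scoped Classical

noncomputable def distMagic {V : Type*} [Fintype V] (G : SimpleGraph V) : Prop :=
  ∃ f : V ≃ Fin (Fintype.card V), ∃ k : ℕ,
    ∀ x : V, ∑ y ∈ G.neighborFinset x, ((f y : ℕ) + 1) = k

noncomputable def closedDistMagic {V : Type*} [Fintype V] (G : SimpleGraph V) : Prop :=
  ∃ f : V ≃ Fin (Fintype.card V), ∃ k : ℕ,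
    ∀ x : V, ∑ y ∈ insert x (G.neighborFinset x), ((f y : ℕ) + 1) = k

noncomputable def hasEigen {V : Type*} [Fintype V] (G : SimpleGraph V) (μ : ℝ) : Prop :=
  ∃ v : V → ℝ, v ≠ 0 ∧ G.adjMatrix ℝ *ᵥ v = μ • v

/-- Auxiliary: the closed-neighborhood sum in the line graph at the edge `s(u,v)` equals
the sum over edges at `u` plus the sum over edges at `v`, minus the value at `s(u,v)`. -/
lemma aux_closed_sum {V : Type*} [Fintype V] (G : SimpleGraph V)
    (u v : V) (h : G.Adj u v) (F : G.edgeSet → ℝ) :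
    ∑ e' ∈ insert (⟨s(u,v), h⟩ : G.edgeSet) ((G.lineGraph).neighborFinset ⟨s(u,v), h⟩), F e'
    = (∑ e' ∈ univ.filter (fun e' : G.edgeSet => u ∈ (e' : Sym2 V)), F e')
      + (∑ e' ∈ univ.filter (fun e' : G.edgeSet => v ∈ (e' : Sym2 V)), F e')
      - F ⟨s(u,v), h⟩ := by
  set e : G.edgeSet := ⟨s(u,v), h⟩
  have hne : u ≠ v := h.ne
  have h1 : insert e ((G.lineGraph).neighborFinset e)
      = univ.filter (fun e' : G.edgeSet => u ∈ (e' : Sym2 V) ∨ v ∈ (e' : Sym2 V)) := by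
    ext e'
    simp only [mem_insert, mem_neighborFinset, mem_filter, mem_univ, true_and]
    constructor
    · rintro (rfl | hadj)
      · exact Or.inl (by simp [e])
      · obtain ⟨hne', w, hw1, hw2⟩ := (lineGraph_adj_iff_exists).mp hadj
        have : w ∈ (e : Sym2 V) := hw1
        rw [Sym2.mem_iff] at this
        rcases this with rfl | rfl
        · exact Or.inl hw2
        · exact Or.inr hw2
    · intro hmem
      by_cases he : e' = e
      · exact Or.inl he
      · refine Or.inr ((lineGraph_adj_iff_exists).mpr ⟨Ne.symm he, ?_⟩)
        rcases hmem with hu | hv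
        · exact ⟨u, by simp [e], hu⟩
        · exact ⟨v, by simp [e], hv⟩
  have h2 : (univ.filter (fun e' : G.edgeSet => u ∈ (e' : Sym2 V)))
      ∩ (univ.filter (fun e' : G.edgeSet => v ∈ (e' : Sym2 V))) = {e} := by
    ext e'
    simp only [mem_inter, mem_filter, mem_univ, true_and, mem_singleton]
    constructor
    · rintro ⟨h1, h2⟩; exact Subtype.ext ((Sym2.mem_and_mem_iff hne).mp ⟨h1, h2⟩)
    · rintro rfl; exact ⟨Sym2.mem_mk_left u v, Sym2.mem_mk_right u v⟩
  rw [h1, Finset.filter_or]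
  have := Finset.sum_union_inter (s₁ := univ.filter (fun e' : G.edgeSet => u ∈ (e' : Sym2 V)))
    (s₂ := univ.filter (fun e' : G.edgeSet => v ∈ (e' : Sym2 V))) (f := F)
  rw [h2] at this
  simp only [Finset.sum_singleton] at this
  linarith

/-- Auxiliary: the sum over edges incident to `u` equals the sum over neighbors of `u`. -/
lemma aux_vertex_sum {V : Type*} [Fintype V] (G : SimpleGraph V)
    (F' : Sym2 V → ℝ) (u : V) :
    ∑ e ∈ univ.filter (fun e : G.edgeSet => u ∈ (e : Sym2 V)), F' (e : Sym2 V)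
    = ∑ v ∈ G.neighborFinset u, F' s(u, v) := by
  refine (Finset.sum_bij (fun v hv => (⟨s(u,v), (G.mem_neighborFinset u v).mp hv⟩ : G.edgeSet))
    ?_ ?_ ?_ ?_).symm
  · intro v hv
    simp [Sym2.mem_mk_left]
  · intro v₁ h₁ v₂ h₂ heq
    have : s(u, v₁) = s(u, v₂) := congrArg Subtype.val heq
    exact Sym2.congr_right.mp this
  · intro e he
    simp only [mem_filter, mem_univ, true_and] at he
    refine ⟨Sym2.Mem.other' he, ?_, ?_⟩
    · rw [G.mem_neighborFinset]
      have hspec := Sym2.other_spec' he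
      have := e.2
      rw [← hspec] at this
      exact (G.mem_edgeSet).mp this
    · exact Subtype.ext (Sym2.other_spec' he)
  · intro v hv; rfl

theorem stmt9 {V : Type*} [Fintype V] (G : SimpleGraph V) (r : ℕ)
    (hr : 2 ≤ r) (hconn : G.Connected) (hreg : G.IsRegularOfDegree r)
    (hcdm : closedDistMagic G.lineGraph) : hasEigen G (1 - r) := by
  obtain ⟨f, k, hk⟩ := hcdm
  set F : G.edgeSet → ℝ := fun e => ((f e : ℕ) : ℝ) + 1 with hF
  have hkR : ∀ e : G.edgeSet,
      ∑ e' ∈ insert e ((G.lineGraph).neighborFinset e), F e' = (k : ℝ) := by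
    intro e
    have := hk e
    push_cast [hF, ← this]
    norm_num
  set S : V → ℝ := fun u => ∑ e ∈ univ.filter (fun e : G.edgeSet => u ∈ (e : Sym2 V)), F e
    with hS
  set F' : Sym2 V → ℝ := fun z => if h : z ∈ G.edgeSet then F ⟨z, h⟩ else 0 with hF'
  have hSalt : ∀ u : V, S u = ∑ v ∈ G.neighborFinset u, F' s(u, v) := by
    intro u
    rw [hS]
    rw [← aux_vertex_sum G F' u]
    refine Finset.sum_congr rfl fun e he => ?_
    simp [hF', e.2]
  -- key edge relation
  have key : ∀ u v : V, (h : G.Adj u v) → S u + S v - F ⟨s(u,v), h⟩ = (k : ℝ) := by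
    intro u v h
    have := aux_closed_sum G u v h F
    rw [hkR ⟨s(u,v), h⟩] at this
    rw [hS]; linarith
  -- the adjacency sum relation
  have key2 : ∀ u : V, ∑ v ∈ G.neighborFinset u, S v = r * k + (1 - r) * S u := by
    intro u
    have h1 : ∑ v ∈ G.neighborFinset u, (S u + S v - F' s(u,v)) = r * k := by
      rw [Finset.sum_congr rfl (fun v hv => ?_)]
      · rw [Finset.sum_const, G.card_neighborFinset_eq_degree, hreg u, nsmul_eq_mul]
      · have hadj : G.Adj u v := (G.mem_neighborFinset u v).mp hv
        have := key u v hadj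
        have hFv : F' s(u,v) = F ⟨s(u,v), hadj⟩ := by simp [hF', hadj]
        rw [hFv]; linarith
    have h2 : ∑ v ∈ G.neighborFinset u, (S u + S v - F' s(u,v))
        = r * S u + (∑ v ∈ G.neighborFinset u, S v) - S u := by
      rw [Finset.sum_sub_distrib, Finset.sum_add_distrib, Finset.sum_const,
        G.card_neighborFinset_eq_degree, hreg u, nsmul_eq_mul, ← hSalt u]
    rw [h2] at h1
    linarith
  -- define the eigenvector
  have h2r : (2 * (r : ℝ) - 1) ≠ 0 := by
    have : (2 : ℝ) ≤ (r : ℝ) := by exact_mod_cast hr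
    linarith
  set c : ℝ := r * k / (2 * r - 1) with hc
  have hcrel : (r : ℝ) * k = (2 * r - 1) * c := by
    rw [hc, mul_div_assoc']; exact (mul_div_cancel_left₀ _ h2r).symm
  refine ⟨fun u => S u - c, ?_, ?_⟩
  · -- nonzero
    intro hzero
    have hconst : ∀ u : V, S u = c := by
      intro u
      have := congrFun hzero u
      simpa [sub_eq_zero] using this
    obtain ⟨u⟩ := hconn.nonempty
    have hcard : 1 < (G.neighborFinset u).card := by
      rw [G.card_neighborFinset_eq_degree, hreg u]; omega
    obtain ⟨v₁, hv₁, v₂, hv₂, hne⟩ := Finset.one_lt_card.mp hcard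
    have hadj₁ : G.Adj u v₁ := (G.mem_neighborFinset u v₁).mp hv₁
    have hadj₂ : G.Adj u v₂ := (G.mem_neighborFinset u v₂).mp hv₂
    have e₁ : G.edgeSet := ⟨s(u,v₁), hadj₁⟩
    have hF₁ : F ⟨s(u,v₁), hadj₁⟩ = 2 * c - k := by
      have := key u v₁ hadj₁; rw [hconst u, hconst v₁] at this; linarith
    have hF₂ : F ⟨s(u,v₂), hadj₂⟩ = 2 * c - k := by
      have := key u v₂ hadj₂; rw [hconst u, hconst v₂] at this; linarith
    have hFF : F ⟨s(u,v₁), hadj₁⟩ = F ⟨s(u,v₂), hadj₂⟩ := by rw [hF₁, hF₂]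
    rw [hF] at hFF
    simp only [add_left_inj, Nat.cast_inj] at hFF
    have : f ⟨s(u,v₁), hadj₁⟩ = f ⟨s(u,v₂), hadj₂⟩ := Fin.ext hFF
    have heq : (⟨s(u,v₁), hadj₁⟩ : G.edgeSet) = ⟨s(u,v₂), hadj₂⟩ := f.injective this
    have : s(u,v₁) = s(u,v₂) := congrArg Subtype.val heq
    exact hne (Sym2.congr_right.mp this)
  · -- eigenvalue equation
    funext u
    rw [G.adjMatrix_mulVec_apply]
    rw [Finset.sum_sub_distrib, Finset.sum_const, G.card_neighborFinset_eq_degree, hreg u,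
      nsmul_eq_mul, key2 u]
    simp only [Pi.smul_apply, smul_eq_mul]
    linarith [hcrel]
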